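/- For the graph G_{d,δ} = K_δ + K_{(δ+1)/3} + ⋯ + K_{(δ+1)/3} + K_δ (sequential sum with d−1 middle blocks), where 3 divides δ+1, the order is n = ((d+5)/3)(δ+1) − 2, the diameter is d, and SW_k(G_{d,δ}) ≥ ((δ+1)/3)^k · ((k−1)(d+2)/(k+1)) · C(d+1, k). -/

import Mathlib

open scoped Classical
open Finset

noncomputable def steinerDist {V : Type*} (G : SimpleGraph V) (S : Finset V) : ℕ :=
  sInf {m : ℕ | ∃ H : G.Subgraph, H.Connected ∧ ↑S ⊆ H.verts ∧ H.edgeSet.ncard = m}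

noncomputable def swk {V : Type*} [Fintype V] (k : ℕ) (G : SimpleGraph V) : ℕ :=
  ∑ S ∈ Finset.powersetCard k (Finset.univ : Finset V), steinerDist G S

noncomputable def wswk {V : Type*} [Fintype V] (k : ℕ) (G : SimpleGraph V) (c : V → ℕ) : ℕ :=
  ∑ S ∈ Finset.powersetCard k (Finset.univ : Finset (Σ v : V, Fin (c v))), steinerDist G (S.image Sigma.fst)

/-- The sequential sum K_{s 0} + K_{s 1} + ⋯ + K_{s (m-1)} of complete graphs: vertices
in the same block or in consecutive blocks are adjacent. -/
def seqSumComplete (m : ℕ) (s : Fin m → ℕ) : SimpleGraph (Σ i : Fin m, Fin (s i)) where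
  Adj x y := x ≠ y ∧ ((x.1 : ℕ) = y.1 ∨ (x.1 : ℕ) + 1 = y.1 ∨ (y.1 : ℕ) + 1 = x.1)
  symm := ⟨by
    rintro x y ⟨h1, h2⟩
    exact ⟨h1.symm, by tauto⟩⟩
  loopless := ⟨fun x h => h.1 rfl⟩

variable {m : ℕ} {s : Fin m → ℕ}

lemma seqSum_walk_length {x y : Σ i : Fin m, Fin (s i)} (w : (seqSumComplete m s).Walk x y) :
    Nat.dist (x.1 : ℕ) (y.1 : ℕ) ≤ w.length := by
  induction w with
  | nil => simp [Nat.dist_self]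
  | @cons a b c h p ih =>
    have h1 : Nat.dist (a.1 : ℕ) (b.1 : ℕ) ≤ 1 := by
      rcases h.2 with h'|h'|h' <;> simp [Nat.dist] <;> omega
    calc Nat.dist (a.1 : ℕ) (c.1 : ℕ) ≤ Nat.dist (a.1:ℕ) (b.1:ℕ) + Nat.dist (b.1:ℕ) (c.1:ℕ) :=
          Nat.dist.triangle_inequality _ _ _
      _ ≤ 1 + p.length := Nat.add_le_add h1 ih
      _ = (SimpleGraph.Walk.cons h p).length := by simp [SimpleGraph.Walk.length_cons]; omega

lemma seqSum_exists_walk (hs : ∀ i, 0 < s i) :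
    ∀ (r : ℕ) (x y : Σ i : Fin m, Fin (s i)), (y.1 : ℕ) = (x.1 : ℕ) + r →
    ∃ w : (seqSumComplete m s).Walk x y, w.length ≤ max 1 r := by
  intro r
  induction r with
  | zero =>
    intro x y hxy
    by_cases hxy' : x = y
    · subst hxy'; exact ⟨SimpleGraph.Walk.nil, by simp⟩
    · exact ⟨SimpleGraph.Walk.cons ⟨hxy', Or.inl (by omega)⟩ SimpleGraph.Walk.nil, le_refl _⟩
  | succ r ih =>
    intro x y hxy
    rcases Nat.eq_zero_or_pos r with hr | hr
    · subst hr
      have hne : x ≠ y := by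
        intro h; subst h; omega
      exact ⟨SimpleGraph.Walk.cons ⟨hne, Or.inr (Or.inl (by omega))⟩ SimpleGraph.Walk.nil, le_refl _⟩
    · have hlt : (x.1 : ℕ) + 1 < m := by
        have := y.1.isLt; omega
      set z : Σ i : Fin m, Fin (s i) := ⟨⟨(x.1 : ℕ) + 1, hlt⟩, ⟨0, hs _⟩⟩ with hz
      have hadj : (seqSumComplete m s).Adj x z := by
        refine ⟨?_, Or.inr (Or.inl rfl)⟩
        intro h
        have : (x.1 : ℕ) = (z.1 : ℕ) := by rw [h]
        simp [hz] at this
      obtain ⟨w, hw⟩ := ih z y (by simp [hz]; omega)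
      exact ⟨SimpleGraph.Walk.cons hadj w, by simp [SimpleGraph.Walk.length_cons]; omega⟩

lemma seqSum_connected (hm : 0 < m) (hs : ∀ i, 0 < s i) : (seqSumComplete m s).Connected := by
  have : Nonempty (Σ i : Fin m, Fin (s i)) := ⟨⟨⟨0, hm⟩, ⟨0, hs _⟩⟩⟩
  refine ⟨fun x y => ?_⟩
  rcases le_total (x.1 : ℕ) (y.1 : ℕ) with h | h
  · obtain ⟨w, _⟩ := seqSum_exists_walk hs ((y.1 : ℕ) - (x.1 : ℕ)) x y (by omega)
    exact ⟨w⟩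
  · obtain ⟨w, _⟩ := seqSum_exists_walk hs ((x.1 : ℕ) - (y.1 : ℕ)) y x (by omega)
    exact ⟨w.reverse⟩

lemma seqSum_diam {d : ℕ} (hd : 1 ≤ d) {s : Fin (d + 1) → ℕ} (hs : ∀ i, 0 < s i) :
    (seqSumComplete (d + 1) s).diam = d := by
  set G := seqSumComplete (d + 1) s with hG
  have hub : ∀ u v : Σ i : Fin (d+1), Fin (s i), G.edist u v ≤ (d : ℕ∞) := by
    intro u v
    rcases le_total (u.1 : ℕ) (v.1 : ℕ) with h | h
    · obtain ⟨w, hw⟩ := seqSum_exists_walk hs ((v.1 : ℕ) - (u.1 : ℕ)) u v (by omega)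
      refine le_trans w.edist_le ?_
      have : w.length ≤ d := by
        have h1 := u.1.isLt
        have h2 := v.1.isLt
        omega
      exact_mod_cast Nat.cast_le.mpr this
    · obtain ⟨w, hw⟩ := seqSum_exists_walk hs ((u.1 : ℕ) - (v.1 : ℕ)) v u (by omega)
      refine le_trans w.reverse.edist_le ?_
      have : w.reverse.length ≤ d := by
        rw [SimpleGraph.Walk.length_reverse]
        have h1 := u.1.isLt
        have h2 := v.1.isLt
        omega
      exact_mod_cast Nat.cast_le.mpr this
  have hlb : ∃ u v : Σ i : Fin (d+1), Fin (s i), (d : ℕ∞) ≤ G.edist u v := by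
    refine ⟨⟨⟨0, by omega⟩, ⟨0, hs _⟩⟩, ⟨⟨d, by omega⟩, ⟨0, hs _⟩⟩, ?_⟩
    rw [SimpleGraph.edist_eq_sInf]
    refine le_sInf ?_
    rintro l ⟨w, rfl⟩
    have := seqSum_walk_length w
    simp only [Nat.dist] at this
    exact_mod_cast Nat.cast_le.mpr (by simp at this; exact this : d ≤ w.length)
  have hediam : G.ediam = (d : ℕ∞) := by
    refine le_antisymm (SimpleGraph.ediam_le_of_edist_le hub) ?_
    obtain ⟨u, v, huv⟩ := hlb
    exact le_trans huv SimpleGraph.edist_le_ediam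
  rw [SimpleGraph.diam, hediam]
  simp

lemma dist_le_steinerDist {V : Type*} [Fintype V] {G : SimpleGraph V} (hG : G.Connected)
    {S : Finset V} {u v : V} (hu : u ∈ S) (hv : v ∈ S) :
    G.dist u v ≤ steinerDist G S := by
  have hne : {m : ℕ | ∃ H : G.Subgraph, H.Connected ∧ ↑S ⊆ H.verts ∧ H.edgeSet.ncard = m}.Nonempty := by
    refine ⟨(⊤ : G.Subgraph).edgeSet.ncard, ⊤, ?_, by simp, rfl⟩
    rw [SimpleGraph.Subgraph.connected_iff']
    exact SimpleGraph.Subgraph.topIso.connected_iff.mpr hG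
  obtain ⟨H, hHc, hHS, hHcard⟩ := Nat.sInf_mem hne
  have hu' : u ∈ H.verts := hHS hu
  have hv' : v ∈ H.verts := hHS hv
  have hr : H.coe.Reachable ⟨u, hu'⟩ ⟨v, hv'⟩ := hHc.coe.preconnected _ _
  obtain ⟨w0⟩ := hr
  set q := w0.bypass with hq
  have hqp : q.IsPath := w0.bypass_isPath
  -- length bound via edges
  set l : List (Sym2 V) := q.edges.map (Sym2.map (Subtype.val)) with hl
  have hlnd : l.Nodup := hqp.edges_nodup.map (Sym2.map.injective Subtype.val_injective)
  have hlsub : ∀ e ∈ l, e ∈ H.edgeSet := by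
    intro e he
    rw [hl, List.mem_map] at he
    obtain ⟨e', he', rfl⟩ := he
    have : e' ∈ H.coe.edgeSet := q.edges_subset_edgeSet he'
    rw [← SimpleGraph.Subgraph.image_coe_edgeSet_coe]
    exact ⟨e', this, rfl⟩
  have hlen : q.length ≤ H.edgeSet.ncard := by
    have h1 : l.toFinset.card = q.length := by
      rw [List.toFinset_card_of_nodup hlnd, hl, List.length_map, q.length_edges]
    have h2 : l.toFinset ⊆ H.edgeSet.toFinset := by
      intro e he
      rw [Set.mem_toFinset]
      exact hlsub e (List.mem_toFinset.mp he)
    calc q.length = l.toFinset.card := h1.symm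
      _ ≤ H.edgeSet.toFinset.card := Finset.card_le_card h2
      _ = H.edgeSet.ncard := (Set.ncard_eq_toFinset_card' _).symm
  calc G.dist u v ≤ (q.map H.hom).length := SimpleGraph.dist_le _
    _ = q.length := SimpleGraph.Walk.length_map _ _
    _ ≤ H.edgeSet.ncard := hlen
    _ = steinerDist G S := hHcard

noncomputable def gB (d : ℕ) (B : Finset (Fin (d + 1))) : ℕ :=
  ((Finset.range d).filter (fun x => (∃ b ∈ B, (b : ℕ) ≤ x) ∧ (∃ b ∈ B, x < (b : ℕ)))).card

lemma gB_le (d : ℕ) {B : Finset (Fin (d + 1))} (hB : B.Nonempty) :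
    gB d B ≤ ((B.max' hB : ℕ)) - ((B.min' hB : ℕ)) := by
  have hsub : ((Finset.range d).filter
      (fun x => (∃ b ∈ B, (b : ℕ) ≤ x) ∧ (∃ b ∈ B, x < (b : ℕ)))) ⊆
      Finset.Ico ((B.min' hB : ℕ)) ((B.max' hB : ℕ)) := by
    intro x hx
    simp only [Finset.mem_filter, Finset.mem_range] at hx
    obtain ⟨hxd, ⟨b1, hb1, hb1x⟩, ⟨b2, hb2, hxb2⟩⟩ := hx
    rw [Finset.mem_Ico]
    constructor
    · exact le_trans (by exact_mod_cast Fin.le_iff_val_le_val.mp (B.min'_le b1 hb1)) hb1x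
    · exact lt_of_lt_of_le hxb2 (by exact_mod_cast Fin.le_iff_val_le_val.mp (B.le_max' b2 hb2))
  calc gB d B ≤ (Finset.Ico ((B.min' hB : ℕ)) ((B.max' hB : ℕ))).card := Finset.card_le_card hsub
    _ = _ := by rw [Nat.card_Ico]

lemma gB_le_steinerDist {d : ℕ} {s : Fin (d + 1) → ℕ}
    (hG : (seqSumComplete (d + 1) s).Connected)
    {S : Finset (Σ i : Fin (d + 1), Fin (s i))} (hS : S.Nonempty) :
    gB d (S.image Sigma.fst) ≤ steinerDist (seqSumComplete (d + 1) s) S := by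
  set B := S.image Sigma.fst with hBdef
  have hB : B.Nonempty := hS.image _
  obtain ⟨u, hu, hufst⟩ := Finset.mem_image.mp (B.min'_mem hB)
  obtain ⟨v, hv, hvfst⟩ := Finset.mem_image.mp (B.max'_mem hB)
  have h1 : gB d B ≤ Nat.dist (u.1 : ℕ) (v.1 : ℕ) := by
    refine le_trans (gB_le d hB) ?_
    rw [hufst, hvfst]
    simp [Nat.dist]
  have h2 : Nat.dist (u.1 : ℕ) (v.1 : ℕ) ≤ (seqSumComplete (d+1) s).dist u v := by
    obtain ⟨p, _, hp⟩ := (hG.preconnected u v).exists_path_of_dist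
    rw [← hp]
    exact seqSum_walk_length p
  exact le_trans h1 (le_trans h2 (dist_le_steinerDist hG hu hv))

lemma fiber_card_ge {d k t : ℕ} {s : Fin (d + 1) → ℕ} (hts : ∀ i, t ≤ s i)
    {B : Finset (Fin (d + 1))} (hBk : B.card = k) :
    t ^ k ≤ ((Finset.powersetCard k (Finset.univ : Finset (Σ i : Fin (d + 1), Fin (s i)))).filter
      (fun S => S.image Sigma.fst = B)).card := by
  set V := (Σ i : Fin (d + 1), Fin (s i))
  set F : ({x // x ∈ B} → Fin t) → Finset V := fun g =>
    B.attach.image (fun i => (⟨i.1, Fin.castLE (hts i.1) (g i)⟩ : V)) with hF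
  have hinj' : ∀ g : {x // x ∈ B} → Fin t,
      Function.Injective (fun i : {x // x ∈ B} => (⟨i.1, Fin.castLE (hts i.1) (g i)⟩ : V)) := by
    intro g i j h
    apply Subtype.ext
    exact congrArg Sigma.fst h
  have hcard : ∀ g, (F g).card = k := by
    intro g
    rw [hF]
    rw [Finset.card_image_of_injective _ (hinj' g), Finset.card_attach, hBk]
  have himg : ∀ g, (F g).image Sigma.fst = B := by
    intro g
    rw [hF]
    simp only [Finset.image_image]
    exact Finset.attach_image_val
  have hmem : ∀ g, F g ∈ ((Finset.powersetCard k (Finset.univ : Finset V)).filter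
      (fun S => S.image Sigma.fst = B)) := by
    intro g
    rw [Finset.mem_filter, Finset.mem_powersetCard]
    exact ⟨⟨Finset.subset_univ _, hcard g⟩, himg g⟩
  have hFinj : Function.Injective F := by
    intro g g' h
    funext i
    have hmem1 : (⟨i.1, Fin.castLE (hts i.1) (g i)⟩ : V) ∈ F g := by
      rw [hF]
      exact Finset.mem_image.mpr ⟨i, Finset.mem_attach _ _, rfl⟩
    rw [h, hF] at hmem1
    obtain ⟨j, _, hj⟩ := Finset.mem_image.mp hmem1
    have hij : j = i := Subtype.ext (congrArg Sigma.fst hj)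
    subst hij
    have := (Sigma.mk.inj_iff.mp hj).2
    have h2 : Fin.castLE (hts j.1) (g' j) = Fin.castLE (hts j.1) (g j) := eq_of_heq this
    have h3 := congrArg Fin.val h2
    simp only [Fin.coe_castLE] at h3
    exact (Fin.ext h3).symm
  have := Fintype.card_le_of_injective
    (fun g => (⟨F g, hmem g⟩ : {S // S ∈ ((Finset.powersetCard k (Finset.univ : Finset V)).filter
      (fun S => S.image Sigma.fst = B))}))
    (fun g g' h => hFinj (congrArg Subtype.val h))
  rwa [Fintype.card_fun, Fintype.card_fin, Fintype.card_coe, hBk, Fintype.card_coe] at this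

lemma sum_range_choose' (n k : ℕ) : ∑ j ∈ Finset.range n, Nat.choose j k = Nat.choose n (k + 1) := by
  induction n with
  | zero => simp
  | succ n ih =>
    rw [Finset.sum_range_succ, ih]
    simp [Nat.choose_succ_succ, Nat.succ_eq_add_one]
    omega

lemma card_filter_lt_fin (d x : ℕ) (hx : x < d) :
    ((Finset.univ : Finset (Fin (d + 1))).filter (fun b : Fin (d + 1) => x < (b : ℕ))).card = d - x := by
  rw [Finset.card_filter, Fin.sum_univ_eq_sum_range (fun i => if x < i then 1 else 0), ← Finset.card_filter]
  have : (Finset.range (d + 1)).filter (fun i => x < i) = Finset.Ico (x + 1) (d + 1) := by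
    ext i
    simp only [Finset.mem_filter, Finset.mem_range, Finset.mem_Ico]
    omega
  rw [this, Nat.card_Ico]
  omega

lemma card_filter_le_fin (d x : ℕ) (hx : x < d) :
    ((Finset.univ : Finset (Fin (d + 1))).filter (fun b : Fin (d + 1) => (b : ℕ) ≤ x)).card = x + 1 := by
  rw [Finset.card_filter, Fin.sum_univ_eq_sum_range (fun i => if i ≤ x then 1 else 0), ← Finset.card_filter]
  have : (Finset.range (d + 1)).filter (fun i => i ≤ x) = Finset.Ico 0 (x + 1) := by
    ext i
    simp only [Finset.mem_filter, Finset.mem_range, Finset.mem_Ico]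
    omega
  rw [this, Nat.card_Ico]
  omega

lemma count_x {d k x : ℕ} (hk : 1 ≤ k) (hx : x < d) :
    ((Finset.powersetCard k (Finset.univ : Finset (Fin (d + 1)))).filter
      (fun B : Finset (Fin (d + 1)) => (∃ b ∈ B, (b : ℕ) ≤ x) ∧ (∃ b ∈ B, x < (b : ℕ)))).card
    + Nat.choose (d - x) k + Nat.choose (x + 1) k = Nat.choose (d + 1) k := by
  set total := Finset.powersetCard k (Finset.univ : Finset (Fin (d + 1))) with htot
  set P : Finset (Fin (d + 1)) → Prop :=
    fun B => (∃ b ∈ B, (b : ℕ) ≤ x) ∧ (∃ b ∈ B, x < (b : ℕ)) with hP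
  have hsplit : (total.filter P).card + (total.filter (fun B => ¬ P B)).card = total.card :=
    Finset.card_filter_add_card_filter_not _
  have hnonempty : ∀ B ∈ total, B.Nonempty := by
    intro B hB
    rw [htot, Finset.mem_powersetCard] at hB
    rw [← Finset.card_pos, hB.2]
    omega
  have hneg : total.filter (fun B => ¬ P B) =
      (total.filter (fun B : Finset (Fin (d + 1)) => ∀ b ∈ B, x < (b : ℕ))) ∪
      (total.filter (fun B : Finset (Fin (d + 1)) => ∀ b ∈ B, (b : ℕ) ≤ x)) := by
    ext B
    simp only [Finset.mem_filter, Finset.mem_union, hP]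
    constructor
    · rintro ⟨hB, hnp⟩
      push_neg at hnp
      by_cases h1 : ∃ b ∈ B, (b : ℕ) ≤ x
      · obtain ⟨b, hb, hbx⟩ := h1
        refine Or.inr ⟨hB, fun c hc => ?_⟩
        by_contra hcx
        exact absurd (hnp ⟨b, hb, hbx⟩) (by push_neg; exact ⟨c, hc, by omega⟩)
      · push_neg at h1
        exact Or.inl ⟨hB, fun c hc => h1 c hc⟩
    · rintro (⟨hB, hall⟩ | ⟨hB, hall⟩) <;> refine ⟨hB, ?_⟩
      · rintro ⟨⟨b, hb, hbx⟩, -⟩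
        exact absurd (hall b hb) (by omega)
      · rintro ⟨-, ⟨b, hb, hbx⟩⟩
        exact absurd (hall b hb) (by omega)
  have hdisj : Disjoint (total.filter (fun B : Finset (Fin (d + 1)) => ∀ b ∈ B, x < (b : ℕ)))
      (total.filter (fun B : Finset (Fin (d + 1)) => ∀ b ∈ B, (b : ℕ) ≤ x)) := by
    rw [Finset.disjoint_left]
    intro B hB1 hB2
    rw [Finset.mem_filter] at hB1 hB2
    obtain ⟨b, hb⟩ := hnonempty B hB1.1
    have := hB1.2 b hb
    have := hB2.2 b hb
    omega
  have hQh : (total.filter (fun B : Finset (Fin (d + 1)) => ∀ b ∈ B, x < (b : ℕ))) =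
      Finset.powersetCard k ((Finset.univ : Finset (Fin (d + 1))).filter
        (fun b : Fin (d + 1) => x < (b : ℕ))) := by
    ext B
    simp only [Finset.mem_filter, htot, Finset.mem_powersetCard, Finset.subset_iff]
    constructor
    · rintro ⟨⟨-, hcard⟩, hall⟩
      exact ⟨fun {b} hb => ⟨Finset.mem_univ _, hall b hb⟩, hcard⟩
    · rintro ⟨hsub, hcard⟩
      exact ⟨⟨fun {b} _ => Finset.mem_univ _, hcard⟩,
        fun b hb => (hsub hb).2⟩
  have hQl : (total.filter (fun B : Finset (Fin (d + 1)) => ∀ b ∈ B, (b : ℕ) ≤ x)) =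
      Finset.powersetCard k ((Finset.univ : Finset (Fin (d + 1))).filter
        (fun b : Fin (d + 1) => (b : ℕ) ≤ x)) := by
    ext B
    simp only [Finset.mem_filter, htot, Finset.mem_powersetCard, Finset.subset_iff]
    constructor
    · rintro ⟨⟨-, hcard⟩, hall⟩
      exact ⟨fun {b} hb => ⟨Finset.mem_univ _, hall b hb⟩, hcard⟩
    · rintro ⟨hsub, hcard⟩
      exact ⟨⟨fun {b} _ => Finset.mem_univ _, hcard⟩,
        fun b hb => (hsub hb).2⟩
  have htotcard : total.card = Nat.choose (d + 1) k := by
    rw [htot, Finset.card_powersetCard, Finset.card_univ, Fintype.card_fin]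
  rw [hneg, Finset.card_union_of_disjoint hdisj, hQh, hQl,
    Finset.card_powersetCard, Finset.card_powersetCard,
    card_filter_lt_fin d x hx, card_filter_le_fin d x hx, htotcard] at hsplit
  simp only [hP] at hsplit
  omega

lemma sum_gB {d k : ℕ} (hk : 1 ≤ k) :
    (∑ B ∈ Finset.powersetCard k (Finset.univ : Finset (Fin (d + 1))), gB d B)
      + 2 * Nat.choose (d + 1) (k + 1) = d * Nat.choose (d + 1) k := by
  have hswap : (∑ B ∈ Finset.powersetCard k (Finset.univ : Finset (Fin (d + 1))), gB d B)
      = ∑ x ∈ Finset.range d,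
        ((Finset.powersetCard k (Finset.univ : Finset (Fin (d + 1)))).filter
          (fun B : Finset (Fin (d + 1)) =>
            (∃ b ∈ B, (b : ℕ) ≤ x) ∧ (∃ b ∈ B, x < (b : ℕ)))).card := by
    unfold gB
    simp only [Finset.card_filter]
    exact Finset.sum_comm
  rw [hswap]
  have hsum : ∑ x ∈ Finset.range d,
      (((Finset.powersetCard k (Finset.univ : Finset (Fin (d + 1)))).filter
          (fun B : Finset (Fin (d + 1)) =>
            (∃ b ∈ B, (b : ℕ) ≤ x) ∧ (∃ b ∈ B, x < (b : ℕ)))).card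
        + Nat.choose (d - x) k + Nat.choose (x + 1) k)
      = ∑ x ∈ Finset.range d, Nat.choose (d + 1) k := by
    refine Finset.sum_congr rfl (fun x hx => ?_)
    exact count_x hk (Finset.mem_range.mp hx)
  rw [Finset.sum_add_distrib, Finset.sum_add_distrib, Finset.sum_const, Finset.card_range,
    smul_eq_mul] at hsum
  have hrefl : ∑ x ∈ Finset.range d, Nat.choose (d - x) k
      = ∑ x ∈ Finset.range d, Nat.choose (x + 1) k := by
    rw [← Finset.sum_range_reflect (fun x => Nat.choose (x + 1) k) d]
    refine Finset.sum_congr rfl (fun x hx => ?_)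
    rw [Finset.mem_range] at hx
    congr 1
    omega
  have hA : ∑ x ∈ Finset.range d, Nat.choose (x + 1) k = Nat.choose (d + 1) (k + 1) := by
    have h0 : Nat.choose 0 k = 0 := Nat.choose_eq_zero_of_lt (by omega)
    have := Finset.sum_range_succ' (fun j => Nat.choose j k) d
    rw [sum_range_choose' (d + 1) k] at this
    omega
  rw [hrefl, hA] at hsum
  omega

lemma part3 {d k t : ℕ} {s : Fin (d + 1) → ℕ} (hd : 1 ≤ d)
    (hs : ∀ i, 0 < s i) (hts : ∀ i, t ≤ s i) :
    t ^ k * ((k - 1) * (d + 2)) * Nat.choose (d + 1) k ≤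
      (k + 1) * swk k (seqSumComplete (d + 1) s) := by
  by_cases hk2 : 2 ≤ k
  swap
  · interval_cases k <;> simp
  by_cases hkd : k ≤ d + 1
  swap
  · rw [Nat.choose_eq_zero_of_lt (by omega)]
    simp
  have hk1 : 1 ≤ k := by omega
  have hG : (seqSumComplete (d + 1) s).Connected := seqSum_connected (by omega) hs
  set G := seqSumComplete (d + 1) s with hGdef
  set P := Finset.powersetCard k (Finset.univ : Finset (Σ i : Fin (d + 1), Fin (s i))) with hP
  set SB := ∑ B ∈ Finset.powersetCard k (Finset.univ : Finset (Fin (d + 1))), gB d B with hSB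
  have hfib : ∑ B ∈ (Finset.univ : Finset (Fin (d + 1))).powerset,
      ∑ S ∈ P.filter (fun S => S.image Sigma.fst = B), steinerDist G S
      = ∑ S ∈ P, steinerDist G S :=
    Finset.sum_fiberwise_of_maps_to
      (fun S _ => Finset.mem_powerset.mpr (Finset.subset_univ _)) _
  have hsub : Finset.powersetCard k (Finset.univ : Finset (Fin (d + 1))) ⊆
      (Finset.univ : Finset (Fin (d + 1))).powerset := by
    intro B hB
    exact Finset.mem_powerset.mpr (Finset.mem_powersetCard.mp hB).1
  have hstep : ∀ B ∈ Finset.powersetCard k (Finset.univ : Finset (Fin (d + 1))),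
      t ^ k * gB d B ≤ ∑ S ∈ P.filter (fun S => S.image Sigma.fst = B), steinerDist G S := by
    intro B hB
    have hBcard : B.card = k := (Finset.mem_powersetCard.mp hB).2
    have hlower : ∀ S ∈ P.filter (fun S => S.image Sigma.fst = B),
        gB d B ≤ steinerDist G S := by
      intro S hS
      rw [Finset.mem_filter, hP, Finset.mem_powersetCard] at hS
      have hSne : S.Nonempty := by
        rw [← Finset.card_pos, hS.1.2]; omega
      rw [← hS.2]
      exact gB_le_steinerDist hG hSne
    calc t ^ k * gB d B
        ≤ (P.filter (fun S => S.image Sigma.fst = B)).card * gB d B :=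
          Nat.mul_le_mul_right _ (fiber_card_ge hts hBcard)
      _ = (P.filter (fun S => S.image Sigma.fst = B)).card • gB d B := by rw [smul_eq_mul]
      _ ≤ _ := Finset.card_nsmul_le_sum _ _ _ hlower
  have hchain : t ^ k * SB ≤ swk k G := by
    calc t ^ k * SB = ∑ B ∈ Finset.powersetCard k (Finset.univ : Finset (Fin (d + 1))),
          t ^ k * gB d B := by rw [hSB, Finset.mul_sum]
      _ ≤ ∑ B ∈ Finset.powersetCard k (Finset.univ : Finset (Fin (d + 1))),
          ∑ S ∈ P.filter (fun S => S.image Sigma.fst = B), steinerDist G S :=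
          Finset.sum_le_sum hstep
      _ ≤ ∑ B ∈ (Finset.univ : Finset (Fin (d + 1))).powerset,
          ∑ S ∈ P.filter (fun S => S.image Sigma.fst = B), steinerDist G S :=
          Finset.sum_le_sum_of_subset hsub
      _ = ∑ S ∈ P, steinerDist G S := hfib
      _ = swk k G := rfl
  set C1 := Nat.choose (d + 1) k with hC1
  set C2 := Nat.choose (d + 1) (k + 1) with hC2
  have hSBeq : SB + 2 * C2 = d * C1 := sum_gB hk1
  have hCC : C2 * (k + 1) = C1 * (d + 1 - k) := Nat.choose_succ_right_eq (d + 1) k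
  have e1 : (k + 1) * SB + 2 * ((d + 1 - k) * C1) = (k + 1) * (d * C1) := by
    have h := congrArg (fun z => (k + 1) * z) hSBeq
    calc (k + 1) * SB + 2 * ((d + 1 - k) * C1)
        = (k + 1) * SB + 2 * (C2 * (k + 1)) := by rw [hCC, mul_comm C1 _]
      _ = (k + 1) * (SB + 2 * C2) := by ring
      _ = (k + 1) * (d * C1) := h
  have e2 : (k - 1) * (d + 2) * C1 + 2 * ((d + 1 - k) * C1) = (k + 1) * (d * C1) := by
    obtain ⟨a, rfl⟩ : ∃ a, k = a + 2 := ⟨k - 2, by omega⟩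
    obtain ⟨b, rfl⟩ : ∃ b, d = a + 1 + b := ⟨d - (a + 1), by omega⟩
    have h1 : a + 2 - 1 = a + 1 := by omega
    have h2 : a + 1 + b + 1 - (a + 2) = b := by omega
    rw [h1, h2]
    ring
  have key : (k - 1) * (d + 2) * C1 = (k + 1) * SB :=
    Nat.add_right_cancel (e2.trans e1.symm)
  calc t ^ k * ((k - 1) * (d + 2)) * C1 = t ^ k * ((k - 1) * (d + 2) * C1) := by ring
    _ = t ^ k * ((k + 1) * SB) := by rw [key]
    _ = (k + 1) * (t ^ k * SB) := by ring
    _ ≤ (k + 1) * swk k G := Nat.mul_le_mul_left _ hchain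

lemma part1 (d δ t : ℕ) (hd : 1 ≤ d) (ht : δ + 1 = 3 * t) :
    (∑ i : Fin (d + 1), (if (i : ℕ) = 0 ∨ (i : ℕ) = d then δ else t)) =
      (d + 5) * (δ + 1) / 3 - 2 := by
  rw [Fin.sum_univ_eq_sum_range (fun i => if i = 0 ∨ i = d then δ else t)]
  rw [Finset.sum_ite, Finset.sum_const, Finset.sum_const, smul_eq_mul, smul_eq_mul]
  have h1 : (Finset.range (d + 1)).filter (fun i => i = 0 ∨ i = d) = {0, d} := by
    ext i
    simp only [Finset.mem_filter, Finset.mem_range, Finset.mem_insert, Finset.mem_singleton]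
    omega
  have hc : ({0, d} : Finset ℕ).card = 2 := by
    rw [Finset.card_insert_of_notMem (by simp; omega), Finset.card_singleton]
  have h2 : ((Finset.range (d + 1)).filter (fun i => ¬(i = 0 ∨ i = d))).card = d - 1 := by
    have h := Finset.card_filter_add_card_filter_not
      (s := Finset.range (d + 1)) (p := fun i => i = 0 ∨ i = d)
    rw [h1] at h
    rw [Finset.card_range] at h
    omega
  rw [h1, h2, hc]
  have h3 : (d + 5) * (δ + 1) / 3 = (d + 5) * t := by
    rw [ht, show (d + 5) * (3 * t) = 3 * ((d + 5) * t) by ring,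
      Nat.mul_div_cancel_left _ (by norm_num)]
  rw [h3]
  obtain ⟨e, rfl⟩ : ∃ e, d = e + 1 := ⟨d - 1, by omega⟩
  have h4 : e + 1 - 1 = e := by omega
  rw [h4]
  have h5 : (e + 1 + 5) * t = e * t + 6 * t := by ring
  omega

/-- for G_{d,δ} = K_δ + K_{(δ+1)/3} + ⋯ + K_{(δ+1)/3} + K_δ with d−1
middle blocks (3 ∣ δ+1), the order is (d+5)(δ+1)/3 − 2, the diameter is d, and
SW_k ≥ ((δ+1)/3)^k·((k−1)(d+2)/(k+1))·C(d+1,k) (stated multiplied by (k+1)). -/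
theorem steiner_wiener_extremal_example (d δ k : ℕ) (hd : 1 ≤ d) (hδ : 3 ∣ δ + 1) :
    let G := seqSumComplete (d + 1)
      (fun i => if (i : ℕ) = 0 ∨ (i : ℕ) = d then δ else (δ + 1) / 3)
    Fintype.card (Σ i : Fin (d + 1),
        Fin (if (i : ℕ) = 0 ∨ (i : ℕ) = d then δ else (δ + 1) / 3)) =
      (d + 5) * (δ + 1) / 3 - 2 ∧
    G.diam = d ∧
    ((δ + 1) / 3) ^ k * ((k - 1) * (d + 2)) * Nat.choose (d + 1) k ≤ (k + 1) * swk k G := by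
  intro G
  have ht : δ + 1 = 3 * ((δ + 1) / 3) := (Nat.mul_div_cancel' hδ).symm
  have hs : ∀ i : Fin (d + 1), 0 < (if (i : ℕ) = 0 ∨ (i : ℕ) = d then δ else (δ + 1) / 3) := by
    intro i
    split <;> omega
  have hts : ∀ i : Fin (d + 1),
      (δ + 1) / 3 ≤ (if (i : ℕ) = 0 ∨ (i : ℕ) = d then δ else (δ + 1) / 3) := by
    intro i
    split <;> omega
  refine ⟨?_, seqSum_diam hd hs, part3 hd hs hts⟩
  rw [Fintype.card_sigma]
  simp only [Fintype.card_fin]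
  exact part1 d δ ((δ + 1) / 3) hd ht
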